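/- lim_{δ → 0+} ( log δ + ∑_{n=1}^∞ (1/n) erfc(√(nδ)) ) = −2 log 2. -/

import Mathlib

open Real MeasureTheory Filter

/-- The complementary error function `erfc(x) = (2/√π) ∫_x^∞ e^{−u²} du`. -/
noncomputable def erfc (x : ℝ) : ℝ :=
  (2 / Real.sqrt π) * ∫ u in Set.Ioi x, Real.exp (-u^2)

open Set


noncomputable def gfun (t : ℝ) : ℝ := Real.exp (-t) * t ^ (-(1/2) : ℝ)

lemma gfun_integrable : IntegrableOn gfun (Ioi 0) := by
  have := Real.GammaIntegral_convergent (s := 1/2) (by norm_num)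
  have e : (-(1/2) : ℝ) = (1/2 : ℝ) - 1 := by norm_num
  unfold gfun; rw [e]; simpa using this

lemma gfun_integral : ∫ t in Ioi 0, gfun t = Real.sqrt π := by
  have := Real.Gamma_eq_integral (s := 1/2) (by norm_num)
  rw [← Real.Gamma_one_half_eq, this]
  congr 1 with t
  have e : (-(1/2) : ℝ) = (1/2 : ℝ) - 1 := by norm_num
  unfold gfun; rw [e]

lemma gfun_nonneg {t : ℝ} (ht : 0 ≤ t) : 0 ≤ gfun t :=
  mul_nonneg (Real.exp_nonneg _) (Real.rpow_nonneg ht _)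

lemma hasDerivAt_Gamma_integral' {s : ℝ} (hs : 0 < s) :
    HasDerivAt Real.Gamma (∫ t in Ioi 0, Real.exp (-t) * t ^ (s - 1) * Real.log t) s := by
  have hc : HasDerivAt Complex.GammaIntegral
      (∫ t : ℝ in Ioi 0, (t : ℂ) ^ ((s : ℂ) - 1) * (Real.log t * Real.exp (-t))) (s : ℂ) :=
    Complex.hasDerivAt_GammaIntegral (by simpa using hs)
  have hr := hc.real_of_complex
  have hval : (∫ t : ℝ in Ioi 0, (t : ℂ) ^ ((s : ℂ) - 1) * (Real.log t * Real.exp (-t)))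
      = ((∫ t in Ioi 0, Real.exp (-t) * t ^ (s - 1) * Real.log t : ℝ) : ℂ) := by
    have coe_eq : ∀ r : ℝ, (r : ℂ) = @RCLike.ofReal ℂ _ r := fun r => rfl
    conv_rhs => rw [coe_eq, ← integral_ofReal]
    refine setIntegral_congr_fun measurableSet_Ioi fun t ht => ?_
    have h1 : (t : ℂ) ^ ((s : ℂ) - 1) = ((t ^ (s - 1 : ℝ) : ℝ) : ℂ) := by
      rw [Complex.ofReal_cpow (le_of_lt ht)]
      norm_num
    rw [← coe_eq, h1]
    push_cast
    ring
  have heq : (fun x : ℝ => (Complex.GammaIntegral x).re) =ᶠ[nhds s] Real.Gamma := by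
    filter_upwards [eventually_gt_nhds hs] with x hx
    rw [← Complex.Gamma_eq_integral (by simpa using hx), Complex.Gamma_ofReal, Complex.ofReal_re]
  have := hr.congr_of_eventuallyEq heq.symm
  rw [hval, Complex.ofReal_re] at this
  exact this

lemma hasDerivAt_Gamma_integral :
    HasDerivAt Real.Gamma (∫ t in Ioi 0, gfun t * Real.log t) (1/2) := by
  have h := hasDerivAt_Gamma_integral' (s := 1/2) (by norm_num)
  have e : ∀ t : ℝ, Real.exp (-t) * t ^ ((1/2 : ℝ) - 1) * Real.log t = gfun t * Real.log t := by
    intro t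
    have e2 : ((1/2 : ℝ) - 1) = (-(1/2) : ℝ) := by norm_num
    rw [e2]; rfl
  simpa only [e] using h

lemma gfun_log_integral :
    ∫ t in Ioi 0, gfun t * Real.log t = -Real.sqrt π * (Real.eulerMascheroniConstant + 2 * Real.log 2) := by
  exact hasDerivAt_Gamma_integral.unique Real.hasDerivAt_Gamma_one_half

lemma gfun_measurable : Measurable gfun := by
  unfold gfun; fun_prop

lemma gfun_log_integrable : IntegrableOn (fun t => gfun t * Real.log t) (Ioi 0) := by
  have hmeas : AEStronglyMeasurable (fun t => gfun t * Real.log t)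
      (volume.restrict (Ioi 0)) :=
    (gfun_measurable.mul Real.measurable_log).aestronglyMeasurable
  have h01 : IntegrableOn (fun t => gfun t * Real.log t) (Ioc 0 1) := by
    have hint : IntegrableOn (fun t : ℝ => 4 * t ^ (-(3/4) : ℝ)) (Ioc 0 1) := by
      refine (IntegrableOn.mono_set ?_ (Ioc_subset_Ioo_right one_lt_two)).const_mul 4
      exact (intervalIntegral.integrableOn_Ioo_rpow_iff two_pos).mpr (by norm_num)
    refine Integrable.mono hint (hmeas.mono_set (Ioc_subset_Ioi_self)) ?_
    refine (ae_restrict_iff' measurableSet_Ioc).mpr (Eventually.of_forall fun t ht => ?_)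
    obtain ⟨ht0, ht1⟩ := ht
    have hlog : |Real.log t| ≤ 4 * t ^ (-(1/4) : ℝ) := by
      have h1 : Real.log t ≤ 0 := Real.log_nonpos (le_of_lt ht0) ht1
      rw [abs_of_nonpos h1]
      have h2 : -Real.log t = 4 * Real.log (t ^ (-(1/4) : ℝ)) := by
        rw [Real.log_rpow ht0]; ring
      rw [h2]
      have := Real.log_le_self (Real.rpow_nonneg (le_of_lt ht0) (-(1/4) : ℝ))
      linarith
    have hg : gfun t ≤ t ^ (-(1/2) : ℝ) := by
      have : Real.exp (-t) ≤ 1 := Real.exp_le_one_iff.mpr (by linarith)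
      calc gfun t ≤ 1 * t ^ (-(1/2) : ℝ) := by
            exact mul_le_mul_of_nonneg_right this (Real.rpow_nonneg (le_of_lt ht0) _)
        _ = t ^ (-(1/2) : ℝ) := one_mul _
    have hgn : 0 ≤ gfun t := gfun_nonneg (le_of_lt ht0)
    rw [Real.norm_eq_abs, Real.norm_eq_abs, abs_mul, abs_of_nonneg hgn]
    have : gfun t * |Real.log t| ≤ t ^ (-(1/2) : ℝ) * (4 * t ^ (-(1/4) : ℝ)) :=
      mul_le_mul hg hlog (abs_nonneg _) (Real.rpow_nonneg (le_of_lt ht0) _)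
    refine this.trans (le_of_eq ?_)
    rw [abs_of_nonneg (by positivity : (0:ℝ) ≤ 4 * t ^ (-(3/4) : ℝ)),
      show (-(3/4) : ℝ) = (-(1/2)) + (-(1/4)) by norm_num, Real.rpow_add ht0]
    ring
  have h1i : IntegrableOn (fun t => gfun t * Real.log t) (Ioi 1) := by
    have hint : IntegrableOn (fun t : ℝ => Real.exp (-t) * t ^ ((5/2 : ℝ) - 1)) (Ioi 1) :=
      (Real.GammaIntegral_convergent (by norm_num)).mono_set (Ioi_subset_Ioi zero_le_one)
    refine Integrable.mono hint (hmeas.mono_set (Ioi_subset_Ioi zero_le_one)) ?_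
    refine (ae_restrict_iff' measurableSet_Ioi).mpr (Eventually.of_forall fun t ht => ?_)
    have ht1 : (1:ℝ) ≤ t := le_of_lt ht
    have ht0 : (0:ℝ) < t := lt_of_lt_of_le one_pos ht1
    rw [Real.norm_eq_abs, Real.norm_eq_abs, abs_mul, abs_of_nonneg (gfun_nonneg ht0.le)]
    have hlog : |Real.log t| ≤ t := by
      rw [abs_of_nonneg (Real.log_nonneg ht1)]
      exact (Real.log_le_self ht0.le)
    have : gfun t * |Real.log t| ≤ gfun t * t :=
      mul_le_mul_of_nonneg_left hlog (gfun_nonneg ht0.le)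
    refine this.trans ?_
    have : gfun t * t = Real.exp (-t) * t ^ ((1/2 : ℝ)) := by
      rw [gfun, mul_assoc]
      congr 1
      calc t ^ (-(1/2):ℝ) * t = t ^ (-(1/2):ℝ) * t ^ (1:ℝ) := by rw [Real.rpow_one]
        _ = t ^ ((-(1/2):ℝ) + 1) := (Real.rpow_add ht0 _ _).symm
        _ = t ^ ((1/2):ℝ) := by norm_num
    rw [this, abs_of_nonneg (by positivity)]
    refine mul_le_mul_of_nonneg_left ?_ (Real.exp_nonneg _)
    exact Real.rpow_le_rpow_of_exponent_le ht1 (by norm_num)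
  have : Ioi (0:ℝ) = Ioc 0 1 ∪ Ioi 1 := (Ioc_union_Ioi_eq_Ioi zero_le_one).symm
  rw [this]
  exact h01.union h1i

lemma sqrt_image_Ioi {a : ℝ} (ha : 0 ≤ a) :
    Real.sqrt '' Ioi a = Ioi (Real.sqrt a) := by
  ext y
  constructor
  · rintro ⟨x, hx, rfl⟩
    exact Real.sqrt_lt_sqrt ha hx
  · intro hy
    have hy0 : 0 ≤ y := le_of_lt (lt_of_le_of_lt (Real.sqrt_nonneg a) hy)
    exact ⟨y ^ 2, Real.lt_sq_of_sqrt_lt hy, Real.sqrt_sq hy0⟩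

lemma erfc_sqrt {a : ℝ} (ha : 0 < a) :
    erfc (Real.sqrt a) = (Real.sqrt π)⁻¹ * ∫ t in Ioi a, gfun t := by
  have hsub : ∫ u in Ioi (Real.sqrt a), Real.exp (-u^2)
      = ∫ t in Ioi a, |1 / (2 * Real.sqrt t)| • Real.exp (-(Real.sqrt t)^2) := by
    rw [← sqrt_image_Ioi ha.le]
    refine integral_image_eq_integral_abs_deriv_smul measurableSet_Ioi
      (fun x hx => ?_) ?_ _
    · exact (Real.hasDerivAt_sqrt (ne_of_gt (ha.trans hx))).hasDerivWithinAt
    · intro x hx y hy hxy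
      have hx0 : 0 ≤ x := (ha.trans hx).le
      have hy0 : 0 ≤ y := (ha.trans hy).le
      exact (Real.sqrt_inj hx0 hy0).mp hxy
  have heq : ∀ t ∈ Ioi a, |1 / (2 * Real.sqrt t)| • Real.exp (-(Real.sqrt t)^2)
      = (1/2) * gfun t := by
    intro t ht
    have ht0 : 0 < t := ha.trans ht
    have hst : 0 < Real.sqrt t := Real.sqrt_pos.mpr ht0
    rw [Real.sq_sqrt ht0.le, smul_eq_mul, abs_of_nonneg (by positivity)]
    rw [gfun]
    have : t ^ (-(1/2) : ℝ) = (Real.sqrt t)⁻¹ := by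
      rw [Real.rpow_neg ht0.le, Real.sqrt_eq_rpow]
    rw [this]
    field_simp
  rw [erfc, hsub, setIntegral_congr_fun measurableSet_Ioi heq, integral_const_mul]
  have hpi : Real.sqrt π ≠ 0 := by positivity
  field_simp

noncomputable def hfun (δ t : ℝ) : ℝ := ((harmonic ⌊t/δ⌋₊ : ℚ) : ℝ)

lemma harmonic_cast_nonneg (n : ℕ) : (0:ℝ) ≤ ((harmonic n : ℚ) : ℝ) := by
  rcases Nat.eq_zero_or_pos n with h | h
  · simp [h]
  · exact_mod_cast (harmonic_pos (Nat.pos_iff_ne_zero.mp h)).le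

lemma hfun_nonneg (δ t : ℝ) : 0 ≤ hfun δ t := harmonic_cast_nonneg _

lemma hfun_measurable (δ : ℝ) : Measurable (hfun δ) := by
  exact (measurable_from_nat (f := fun n : ℕ => ((harmonic n : ℚ) : ℝ))).comp
    (Nat.measurable_floor.comp (measurable_id.div_const δ))

lemma hfun_le {δ t : ℝ} (hδ : 0 < δ) (ht : 0 < t) :
    hfun δ t ≤ 1 + |Real.log t| + |Real.log δ| := by
  rcases lt_or_ge (t/δ) 1 with h | h
  · have : ⌊t/δ⌋₊ = 0 := Nat.floor_eq_zero.mpr h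
    rw [hfun, this]
    simp only [harmonic_zero, Rat.cast_zero]
    positivity
  · refine le_trans (harmonic_floor_le_one_add_log _ h) ?_
    rw [Real.log_div (ne_of_gt ht) (ne_of_gt hδ)]
    have h1 : Real.log t ≤ |Real.log t| := le_abs_self _
    have h2 : -Real.log δ ≤ |Real.log δ| := neg_le_abs _
    linarith

lemma hfun_ge {δ t : ℝ} (hδ : 0 < δ) (ht : 0 < t) :
    Real.log t - Real.log δ ≤ hfun δ t := by
  have := log_le_harmonic_floor (t/δ) (by positivity)
  rwa [Real.log_div (ne_of_gt ht) (ne_of_gt hδ), sub_eq_add_neg] at this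

lemma gfun_abs_log_integrable :
    IntegrableOn (fun t => gfun t * |Real.log t|) (Ioi 0) := by
  refine (gfun_log_integrable.abs).congr ?_
  refine (ae_restrict_iff' measurableSet_Ioi).mpr (Eventually.of_forall fun t ht => ?_)
  show |gfun t * Real.log t| = gfun t * |Real.log t|
  rw [abs_mul, abs_of_nonneg (gfun_nonneg (le_of_lt ht))]

lemma gfun_hfun_integrable {δ : ℝ} (hδ : 0 < δ) :
    IntegrableOn (fun t => gfun t * hfun δ t) (Ioi 0) := by
  have hbound : IntegrableOn
      (fun t => gfun t * (1 + |Real.log t| + |Real.log δ|)) (Ioi 0) := by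
    have : (fun t => gfun t * (1 + |Real.log t| + |Real.log δ|))
        = fun t => (gfun t * (1 + |Real.log δ|) + gfun t * |Real.log t|) := by
      funext t; ring
    rw [this]
    exact (gfun_integrable.mul_const _).add gfun_abs_log_integrable
  refine Integrable.mono hbound
    ((gfun_measurable.mul (hfun_measurable δ)).aestronglyMeasurable) ?_
  refine (ae_restrict_iff' measurableSet_Ioi).mpr (Eventually.of_forall fun t ht => ?_)
  have ht0 : (0:ℝ) < t := ht
  rw [Real.norm_eq_abs, Real.norm_eq_abs, abs_mul, abs_of_nonneg (gfun_nonneg ht0.le),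
    abs_of_nonneg (hfun_nonneg δ t)]
  rw [abs_of_nonneg (mul_nonneg (gfun_nonneg ht0.le) (by positivity))]
  exact mul_le_mul_of_nonneg_left (hfun_le hδ ht0) (gfun_nonneg ht0.le)

lemma tsum_erfc_eq {δ : ℝ} (hδ : 0 < δ) :
    ∑' n : ℕ, (1/(n+1 : ℝ)) * erfc (Real.sqrt ((n+1) * δ))
      = ∫ t in Ioi 0, (Real.sqrt π)⁻¹ * (gfun t * hfun δ t) := by
  set c : ℕ → ℝ := fun n => (n+1) * δ with hc
  have hcpos : ∀ n : ℕ, 0 < c n := fun n => by positivity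
  set Fn : ℕ → ℝ → ℝ :=
    fun n t => (1/(n+1 : ℝ)) * (Real.sqrt π)⁻¹ * (Ici (c n)).indicator gfun t with hFn
  have hFn_int : ∀ n, Integrable (Fn n) (volume.restrict (Ioi 0)) := fun n =>
    (gfun_integrable.indicator measurableSet_Ici).const_mul _
  -- each term equals the integral of Fn n
  have hterm : ∀ n : ℕ, (1/(n+1 : ℝ)) * erfc (Real.sqrt ((n+1) * δ))
      = ∫ t in Ioi 0, Fn n t := by
    intro n
    have h1 : ∫ t in Ioi 0, Fn n t
        = (1/(n+1 : ℝ)) * (Real.sqrt π)⁻¹ * ∫ t in Ioi 0, (Ici (c n)).indicator gfun t := by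
      simp only [hFn]
      rw [MeasureTheory.integral_const_mul]
    have hint : Ioi (0:ℝ) ∩ Ici (c n) = Ici (c n) :=
      inter_eq_self_of_subset_right (fun x hx => lt_of_lt_of_le (hcpos n) hx)
    rw [h1, setIntegral_indicator measurableSet_Ici, hint,
      integral_Ici_eq_integral_Ioi, erfc_sqrt (hcpos n)]
    ring
  -- summability of the integrals of norms
  have hnorm_le : ∀ n : ℕ, (∫ t in Ioi 0, ‖Fn n t‖)
      ≤ (Real.sqrt π)⁻¹ * δ ^ (-(1/2) : ℝ) * Real.exp (-c n) := by
    intro n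
    have hRHS_int : Integrable
        ((Ici (c n)).indicator fun t => (Real.sqrt π)⁻¹ * (δ ^ (-(1/2) : ℝ) * Real.exp (-t)))
        (volume.restrict (Ioi 0)) := by
      refine Integrable.indicator ?_ measurableSet_Ici
      refine Integrable.const_mul ?_ _
      refine Integrable.const_mul ?_ _
      exact (exp_neg_integrableOn_Ioi 0 one_pos).congr_fun (fun x _ => by ring_nf)
        measurableSet_Ioi
    have hle : ∀ t ∈ Ioi (0:ℝ), ‖Fn n t‖
        ≤ (Ici (c n)).indicator (fun t => (Real.sqrt π)⁻¹ * (δ ^ (-(1/2) : ℝ) * Real.exp (-t))) t := by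
      intro t ht
      by_cases hmem : t ∈ Ici (c n)
      · have hδc : δ ≤ c n := by
          show δ ≤ ((n:ℝ)+1) * δ
          have h1 : (1:ℝ) ≤ (n:ℝ) + 1 := by linarith [Nat.cast_nonneg (α := ℝ) n]
          calc δ = 1 * δ := (one_mul δ).symm
            _ ≤ ((n:ℝ)+1) * δ := mul_le_mul_of_nonneg_right h1 hδ.le
        have htδ : δ ≤ t := le_trans hδc hmem
        have ht0 : (0:ℝ) < t := lt_of_lt_of_le hδ htδ
        rw [indicator_of_mem hmem, hFn]
        simp only [indicator_of_mem hmem]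
        rw [Real.norm_eq_abs, abs_mul, abs_mul, abs_of_nonneg (gfun_nonneg ht0.le)]
        rw [abs_of_nonneg (by positivity : (0:ℝ) ≤ (1/(n+1:ℝ))),
          abs_of_nonneg (by positivity : (0:ℝ) ≤ (Real.sqrt π)⁻¹)]
        have h2 : gfun t ≤ δ ^ (-(1/2) : ℝ) * Real.exp (-t) := by
          rw [gfun, mul_comm]
          exact mul_le_mul_of_nonneg_right
            (Real.rpow_le_rpow_of_nonpos hδ htδ (by norm_num)) (Real.exp_nonneg _)
        calc (1/(n+1:ℝ)) * (Real.sqrt π)⁻¹ * gfun t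
            ≤ 1 * (Real.sqrt π)⁻¹ * (δ ^ (-(1/2) : ℝ) * Real.exp (-t)) := by
              refine mul_le_mul (by
                refine mul_le_mul_of_nonneg_right ?_ (by positivity)
                rw [div_le_one (by positivity)]; linarith [Nat.cast_nonneg (α := ℝ) n]) h2
                (gfun_nonneg ht0.le) (by positivity)
          _ = (Real.sqrt π)⁻¹ * (δ ^ (-(1/2) : ℝ) * Real.exp (-t)) := by ring
      · rw [indicator_of_notMem hmem, hFn]
        simp only [indicator_of_notMem hmem, mul_zero, norm_zero, le_refl]
    have := setIntegral_mono_on (hFn_int n).norm hRHS_int measurableSet_Ioi hle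
    refine this.trans (le_of_eq ?_)
    have hint : Ioi (0:ℝ) ∩ Ici (c n) = Ici (c n) :=
      inter_eq_self_of_subset_right (fun x hx => lt_of_lt_of_le (hcpos n) hx)
    rw [setIntegral_indicator measurableSet_Ici, hint,
      integral_Ici_eq_integral_Ioi]
    rw [MeasureTheory.integral_const_mul, MeasureTheory.integral_const_mul, integral_exp_neg_Ioi]
    ring
  have hsummable : Summable (fun n => ∫ t in Ioi 0, ‖Fn n t‖) := by
    refine Summable.of_nonneg_of_le
      (fun n => integral_nonneg (fun t => norm_nonneg _)) hnorm_le ?_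
    have : (fun n : ℕ => (Real.sqrt π)⁻¹ * δ ^ (-(1/2) : ℝ) * Real.exp (-c n))
        = fun n : ℕ => ((Real.sqrt π)⁻¹ * δ ^ (-(1/2) : ℝ) * Real.exp (-δ)) * (Real.exp (-δ)) ^ n := by
      funext n
      rw [← Real.exp_nat_mul]
      rw [show -c n = -δ + n * -δ by rw [hc]; ring, Real.exp_add]
      ring
    rw [this]
    exact (summable_geometric_of_lt_one (Real.exp_nonneg _)
      (Real.exp_lt_one_iff.mpr (by linarith))).mul_left _
  -- swap sum and integral
  have hswap := MeasureTheory.integral_tsum_of_summable_integral_norm hFn_int hsummable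
  calc ∑' n : ℕ, (1/(n+1 : ℝ)) * erfc (Real.sqrt ((n+1) * δ))
      = ∑' n : ℕ, ∫ t in Ioi 0, Fn n t := by exact tsum_congr hterm
    _ = ∫ t in Ioi 0, ∑' n : ℕ, Fn n t := hswap
    _ = ∫ t in Ioi 0, (Real.sqrt π)⁻¹ * (gfun t * hfun δ t) := by
        refine setIntegral_congr_fun measurableSet_Ioi fun t ht => ?_
        have ht0 : (0:ℝ) < t := ht
        set m : ℕ := ⌊t/δ⌋₊ with hm
        have hsum : ∑' n : ℕ, Fn n t = ∑ n ∈ Finset.range m, Fn n t := by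
          refine tsum_eq_sum fun n hn => ?_
          rw [Finset.mem_range, not_lt] at hn
          have : t ∉ Ici (c n) := by
            simp only [mem_Ici, not_le]
            have h1 : (t/δ) < m + 1 := Nat.lt_floor_add_one _
            have h2 : (m:ℝ) + 1 ≤ (n:ℝ) + 1 := by linarith [(Nat.cast_le (α := ℝ)).mpr hn]
            calc t = (t/δ) * δ := by field_simp
              _ < ((m:ℝ)+1) * δ := by exact mul_lt_mul_of_pos_right h1 hδ
              _ ≤ ((n:ℝ)+1) * δ := mul_le_mul_of_nonneg_right h2 hδ.le
          rw [hFn]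
          simp only [indicator_of_notMem this, mul_zero]
        rw [hsum]
        have hval : ∀ n ∈ Finset.range m, Fn n t
            = (Real.sqrt π)⁻¹ * gfun t * (1/(n+1 : ℝ)) := by
          intro n hn
          rw [Finset.mem_range] at hn
          have hmem : t ∈ Ici (c n) := by
            simp only [mem_Ici]
            have h1 : ((n:ℝ)+1) ≤ (m:ℝ) := by exact_mod_cast Nat.succ_le_of_lt hn
            have h2 : (m:ℝ) ≤ t/δ := Nat.floor_le (by positivity)
            calc c n = ((n:ℝ)+1) * δ := rfl
              _ ≤ (t/δ) * δ := mul_le_mul_of_nonneg_right (h1.trans h2) hδ.le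
              _ = t := by field_simp
          rw [hFn]
          simp only [indicator_of_mem hmem]
          ring
        rw [Finset.sum_congr rfl hval, ← Finset.mul_sum]
        have : ∑ n ∈ Finset.range m, (1/(n+1 : ℝ)) = hfun δ t := by
          rw [hfun, ← hm, harmonic]
          push_cast
          simp [one_div]
        rw [this]
        ring

lemma hfun_tendsto {t : ℝ} (ht : 0 < t) :
    Tendsto (fun δ => hfun δ t + Real.log δ) (nhdsWithin 0 (Ioi 0))
      (nhds (Real.eulerMascheroniConstant + Real.log t)) := by
  have hdiv : Tendsto (fun δ : ℝ => t / δ) (nhdsWithin 0 (Ioi 0)) atTop := by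
    have := tendsto_inv_nhdsGT_zero (𝕜 := ℝ)
    have h2 := this.const_mul_atTop ht
    refine h2.congr fun δ => ?_
    rw [div_eq_mul_inv]
  have hm : Tendsto (fun δ : ℝ => ⌊t/δ⌋₊) (nhdsWithin 0 (Ioi 0)) atTop :=
    tendsto_nat_floor_atTop.comp hdiv
  have hA : Tendsto (fun δ : ℝ => ((harmonic ⌊t/δ⌋₊ : ℚ) : ℝ) - Real.log ⌊t/δ⌋₊)
      (nhdsWithin 0 (Ioi 0)) (nhds Real.eulerMascheroniConstant) :=
    Real.tendsto_harmonic_sub_log.comp hm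
  have hB : Tendsto (fun δ : ℝ => (⌊t/δ⌋₊ : ℝ) * δ) (nhdsWithin 0 (Ioi 0)) (nhds t) := by
    have hlow : Tendsto (fun δ : ℝ => t - δ) (nhdsWithin 0 (Ioi 0)) (nhds t) := by
      have : Tendsto (fun δ : ℝ => t - δ) (nhds 0) (nhds (t - 0)) :=
        (continuous_const.sub continuous_id).tendsto 0
      rw [sub_zero] at this
      exact this.mono_left nhdsWithin_le_nhds
    refine tendsto_of_tendsto_of_tendsto_of_le_of_le' hlow tendsto_const_nhds ?_ ?_
    · filter_upwards [self_mem_nhdsWithin] with δ (hδ : 0 < δ)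
      have h1 : t/δ < ⌊t/δ⌋₊ + 1 := Nat.lt_floor_add_one _
      have : t < ((⌊t/δ⌋₊ : ℝ) + 1) * δ := by
        calc t = (t/δ) * δ := by field_simp
          _ < ((⌊t/δ⌋₊ : ℝ) + 1) * δ := mul_lt_mul_of_pos_right h1 hδ
      linarith
    · filter_upwards [self_mem_nhdsWithin] with δ (hδ : 0 < δ)
      have h2 : (⌊t/δ⌋₊ : ℝ) ≤ t/δ := Nat.floor_le (by positivity)
      calc (⌊t/δ⌋₊ : ℝ) * δ ≤ (t/δ) * δ := mul_le_mul_of_nonneg_right h2 hδ.le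
        _ = t := by field_simp
  have hBlog : Tendsto (fun δ : ℝ => Real.log ((⌊t/δ⌋₊ : ℝ) * δ))
      (nhdsWithin 0 (Ioi 0)) (nhds (Real.log t)) :=
    ((Real.continuousAt_log ht.ne').tendsto).comp hB
  refine (hA.add hBlog).congr' ?_
  have hIoo : Ioo (0:ℝ) t ∈ nhdsWithin (0:ℝ) (Ioi 0) :=
    Ioo_mem_nhdsGT_of_mem ⟨le_refl 0, ht⟩
  filter_upwards [hIoo] with δ hδ
  obtain ⟨hδ0, hδt⟩ := hδ
  have hm1 : 1 ≤ ⌊t/δ⌋₊ := by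
    rw [Nat.one_le_iff_ne_zero, ← Nat.pos_iff_ne_zero, Nat.floor_pos]
    rw [le_div_iff₀ hδ0, one_mul]
    exact hδt.le
  have hmne : ((⌊t/δ⌋₊ : ℝ)) ≠ 0 := by
    have : (0:ℝ) < (⌊t/δ⌋₊ : ℝ) := by exact_mod_cast hm1
    exact this.ne'
  rw [Real.log_mul hmne hδ0.ne']
  rw [hfun]
  ring

/-- `lim_{δ → 0+} ( log δ + ∑_{n≥1} (1/n) erfc(√(nδ)) ) = −2 log 2`. -/
theorem erfc_series_log_limit :
    Tendsto (fun δ : ℝ =>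
        Real.log δ + ∑' n : ℕ, (1/(n+1 : ℝ)) * erfc (Real.sqrt ((n+1) * δ)))
      (nhdsWithin 0 (Set.Ioi 0)) (nhds (-2 * Real.log 2)) := by
  set γ := Real.eulerMascheroniConstant
  have hπ : (0:ℝ) < Real.sqrt π := Real.sqrt_pos.mpr pi_pos
  -- the limit integral
  have hlim_int : ∫ t in Ioi 0, gfun t * (γ + Real.log t)
      = Real.sqrt π * γ + (-Real.sqrt π * (γ + 2 * Real.log 2)) := by
    have h1 : ∀ t : ℝ, gfun t * (γ + Real.log t) = gfun t * γ + gfun t * Real.log t :=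
      fun t => by ring
    simp_rw [h1]
    rw [integral_add (gfun_integrable.mul_const γ) gfun_log_integrable,
      integral_mul_const, gfun_integral, gfun_log_integral]
  -- the DCT step
  have hDCT : Tendsto (fun δ : ℝ => ∫ t in Ioi 0, gfun t * (hfun δ t + Real.log δ))
      (nhdsWithin 0 (Ioi 0)) (nhds (∫ t in Ioi 0, gfun t * (γ + Real.log t))) := by
    refine tendsto_integral_filter_of_dominated_convergence
      (fun t => gfun t * (1 + |Real.log t|)) ?_ ?_ ?_ ?_
    · refine Eventually.of_forall fun δ => ?_
      exact (gfun_measurable.mul ((hfun_measurable δ).add_const _)).aestronglyMeasurable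
    · have hIoo : Ioo (0:ℝ) 1 ∈ nhdsWithin (0:ℝ) (Ioi 0) :=
        Ioo_mem_nhdsGT_of_mem ⟨le_refl 0, one_pos⟩
      filter_upwards [hIoo] with δ hδ
      obtain ⟨hδ0, hδ1⟩ := hδ
      refine (ae_restrict_iff' measurableSet_Ioi).mpr (Eventually.of_forall fun t ht => ?_)
      have ht0 : (0:ℝ) < t := ht
      rw [Real.norm_eq_abs, abs_mul, abs_of_nonneg (gfun_nonneg ht0.le)]
      refine mul_le_mul_of_nonneg_left ?_ (gfun_nonneg ht0.le)
      rw [abs_le]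
      constructor
      · have := hfun_ge hδ0 ht0
        have h1 : -|Real.log t| ≤ Real.log t := neg_abs_le _
        linarith
      · rcases lt_or_ge t δ with hcase | hcase
        · have hfl : ⌊t/δ⌋₊ = 0 := Nat.floor_eq_zero.mpr ((div_lt_one hδ0).mpr hcase)
          have : hfun δ t = 0 := by rw [hfun, hfl]; simp
          rw [this, zero_add]
          have : Real.log δ ≤ 0 := Real.log_nonpos hδ0.le hδ1.le
          have h2 : (0:ℝ) ≤ |Real.log t| := abs_nonneg _
          linarith
        · have h1 : hfun δ t ≤ 1 + (Real.log t - Real.log δ) := by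
            have := harmonic_floor_le_one_add_log (t/δ) ((one_le_div hδ0).mpr hcase)
            rwa [Real.log_div ht0.ne' hδ0.ne'] at this
          have h2 : Real.log t ≤ |Real.log t| := le_abs_self _
          linarith
    · have : (fun t => gfun t * (1 + |Real.log t|))
          = fun t => (gfun t + gfun t * |Real.log t|) := by funext t; ring
      rw [this]
      exact gfun_integrable.add gfun_abs_log_integrable
    · refine (ae_restrict_iff' measurableSet_Ioi).mpr (Eventually.of_forall fun t ht => ?_)
      have ht0 : (0:ℝ) < t := ht
      exact (hfun_tendsto ht0).const_mul (gfun t)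
  -- identify the integrals with the given expression
  have hEq : ∀ᶠ δ in nhdsWithin (0:ℝ) (Ioi 0),
      (Real.sqrt π)⁻¹ * ∫ t in Ioi 0, gfun t * (hfun δ t + Real.log δ)
        = Real.log δ + ∑' n : ℕ, (1/(n+1 : ℝ)) * erfc (Real.sqrt ((n+1) * δ)) := by
    filter_upwards [self_mem_nhdsWithin] with δ (hδ : 0 < δ)
    have h1 : ∀ t : ℝ, gfun t * (hfun δ t + Real.log δ)
        = gfun t * hfun δ t + gfun t * Real.log δ := fun t => by ring
    simp_rw [h1]
    rw [integral_add (gfun_hfun_integrable hδ) (gfun_integrable.mul_const _),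
      integral_mul_const, gfun_integral]
    rw [tsum_erfc_eq hδ, MeasureTheory.integral_const_mul]
    field_simp
    ring
  have hfinal := (hDCT.const_mul ((Real.sqrt π)⁻¹)).congr' hEq
  have hval : (Real.sqrt π)⁻¹ * ∫ t in Ioi 0, gfun t * (γ + Real.log t)
      = -2 * Real.log 2 := by
    rw [hlim_int]
    field_simp
    ring
  rwa [hval] at hfinal
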